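/- Let Δ ≥ 1 be a natural number, α > 0, N ≥ 0, and β ≥ (101/100)^(α/2). Place points v_i = (i, 0) and u_i = (i, 10Δ) in the Euclidean plane for i ∈ {1, …, Δ}, with each v_i assigned an arbitrary power P_i > 0. Then for every natural number T < Δ and every sequence S_1, …, S_T of sending sets with S_t ⊆ {v_1, …, v_Δ}, there exists an index i such that for every slot t, it is not the case that both v_i ∈ S_t and SINR_{u_i}(v_i) ≥ β (computed with respect to S_t). Consequently, no transmission schedule of fewer than Δ slots lets every receiver u_i obtain a message from its unique neighbor v_i, so the progress bound satisfies f_prog ≥ Δ even for a centrally computed optimal schedule with arbitrary transmission powers. -/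

import Mathlib

open scoped BigOperators
open scoped Classical

/-- The point `(x, y)` in the Euclidean plane. -/
noncomputable def pt (x y : ℝ) : EuclideanSpace ℝ (Fin 2) :=
  (WithLp.equiv 2 (Fin 2 → ℝ)).symm ![x, y]

/-- The SINR of sender `v` at receiver `u`, given a set `S` of simultaneously transmitting
sender positions in the Euclidean plane, powers `P`, path-loss exponent `α` and noise `N`. -/
noncomputable def sinr (α N : ℝ) (S : Finset (EuclideanSpace ℝ (Fin 2)))
    (P : EuclideanSpace ℝ (Fin 2) → ℝ) (u v : EuclideanSpace ℝ (Fin 2)) : ℝ :=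
  (P v * dist v u ^ (-α)) /
    ((∑ w ∈ S.filter fun w => w ≠ u ∧ w ≠ v, P w * dist w u ^ (-α)) + N)

lemma dist_pt (a b c d : ℝ) :
    dist (pt a b) (pt c d) = Real.sqrt ((a - c)^2 + (b - d)^2) := by
  simp [pt, EuclideanSpace.dist_eq, Fin.sum_univ_two, Real.dist_eq, sq_abs]

lemma pt_inj {a b c d : ℝ} (h : pt a b = pt c d) : a = c ∧ b = d := by
  constructor
  · have := congrArg (fun f => f 0) h; simpa [pt] using this
  · have := congrArg (fun f => f 1) h; simpa [pt] using this

lemma sinr_bound (Δ : ℕ) (hΔ : 1 ≤ Δ) (α N : ℝ) (hα : 0 < α) (hN : 0 ≤ N)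
    (P : EuclideanSpace ℝ (Fin 2) → ℝ)
    (hP : ∀ i ∈ Finset.Icc 1 Δ, 0 < P (pt i 0))
    (St : Finset (EuclideanSpace ℝ (Fin 2)))
    (hSt : St ⊆ (Finset.Icc 1 Δ).image fun i : ℕ => pt i 0)
    (i j : ℕ) (hi : i ∈ Finset.Icc 1 Δ) (hj : j ∈ Finset.Icc 1 Δ) (hij : i ≠ j)
    (hjS : pt j 0 ∈ St) :
    sinr α N St P (pt i (10 * Δ)) (pt i 0) * P (pt j 0)
      < P (pt i 0) * ((101 : ℝ) / 100) ^ (α / 2) := by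
  have hΔr : (1 : ℝ) ≤ (Δ : ℝ) := by exact_mod_cast hΔ
  have hd0 : (0 : ℝ) < 10 * Δ := by linarith
  obtain ⟨hi1, hi2⟩ := Finset.mem_Icc.mp hi
  obtain ⟨hj1, hj2⟩ := Finset.mem_Icc.mp hj
  have hi1r : (1 : ℝ) ≤ (i : ℝ) := by exact_mod_cast hi1
  have hi2r : (i : ℝ) ≤ (Δ : ℝ) := by exact_mod_cast hi2
  have hj1r : (1 : ℝ) ≤ (j : ℝ) := by exact_mod_cast hj1
  have hj2r : (j : ℝ) ≤ (Δ : ℝ) := by exact_mod_cast hj2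
  have hpi := hP i hi
  have hpj := hP j hj
  -- distance from v_i to u_i
  have hdist0 : dist (pt i 0) (pt i (10 * Δ)) = 10 * Δ := by
    rw [dist_pt]
    have : ((i : ℝ) - i)^2 + ((0 : ℝ) - 10 * Δ)^2 = (10 * Δ)^2 := by ring
    rw [this, Real.sqrt_sq hd0.le]
  -- distance from v_j to u_i
  set D := dist (pt j 0) (pt i (10 * Δ)) with hDdef
  have hD2 : D ^ 2 = ((j : ℝ) - i)^2 + (10 * Δ)^2 := by
    rw [hDdef, dist_pt, Real.sq_sqrt (by positivity)]
    ring_nf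
  have hDnn : 0 ≤ D := dist_nonneg
  have hDpos : 0 < D := by nlinarith [hD2]
  have hDlt : D ^ 2 < (101 / 100) * (10 * Δ)^2 := by
    have h1 : ((j : ℝ) - i)^2 ≤ ((Δ : ℝ) - 1)^2 := by
      nlinarith [mul_nonneg (by linarith : (0:ℝ) ≤ (Δ:ℝ) - 1 - ((j:ℝ) - i))
        (by linarith : (0:ℝ) ≤ (Δ:ℝ) - 1 + ((j:ℝ) - i))]
    nlinarith [hD2]
  -- the interference term from v_j
  have hne1 : pt (j : ℝ) 0 ≠ pt i (10 * Δ) := by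
    intro h; have := (pt_inj h).2; linarith
  have hne2 : pt (j : ℝ) 0 ≠ pt (i : ℝ) 0 := by
    intro h
    have hji : (j : ℝ) = i := (pt_inj h).1
    exact hij (by exact_mod_cast hji.symm)
  have hjF : pt (j : ℝ) 0 ∈ St.filter fun w => w ≠ pt i (10 * Δ) ∧ w ≠ pt i 0 :=
    Finset.mem_filter.mpr ⟨hjS, hne1, hne2⟩
  have hterm : ∀ w ∈ St.filter fun w => w ≠ pt i (10 * Δ) ∧ w ≠ pt i 0,
      0 ≤ P w * dist w (pt i (10 * Δ)) ^ (-α) := by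
    intro w hw
    have hw' := Finset.mem_filter.mp hw
    obtain ⟨k, hk, hkw⟩ := Finset.mem_image.mp (hSt hw'.1)
    refine mul_nonneg ?_ (Real.rpow_nonneg dist_nonneg _)
    rw [← hkw]; exact (hP k hk).le
  have hSum : P (pt j 0) * D ^ (-α) ≤
      ∑ w ∈ St.filter fun w => w ≠ pt i (10 * Δ) ∧ w ≠ pt i 0,
        P w * dist w (pt i (10 * Δ)) ^ (-α) :=
    Finset.single_le_sum hterm hjF
  have hDen : 0 < P (pt j 0) * D ^ (-α) :=
    mul_pos hpj (Real.rpow_pos_of_pos hDpos _)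
  have hDenom : 0 < (∑ w ∈ St.filter fun w => w ≠ pt i (10 * Δ) ∧ w ≠ pt i 0,
        P w * dist w (pt i (10 * Δ)) ^ (-α)) + N := by linarith
  have hnum : 0 < P (pt i 0) * (10 * (Δ:ℝ)) ^ (-α) :=
    mul_pos hpi (Real.rpow_pos_of_pos hd0 _)
  have hsinr_le : sinr α N St P (pt i (10 * Δ)) (pt i 0)
      ≤ P (pt i 0) * (10 * (Δ:ℝ)) ^ (-α) / (P (pt j 0) * D ^ (-α)) := by
    rw [sinr, hdist0]
    apply div_le_div_of_nonneg_left hnum.le hDen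
    linarith
  -- the ratio bound
  have hr : ((D / (10 * Δ)) : ℝ) ^ (α : ℝ) < ((101 : ℝ) / 100) ^ (α / 2) := by
    have hb : ((D / (10 * Δ)) ^ 2 : ℝ) < 101 / 100 := by
      rw [div_pow, div_lt_iff₀ (by positivity)]
      linarith
    have hb0 : (0 : ℝ) ≤ (D / (10 * Δ)) ^ 2 := sq_nonneg _
    have := Real.rpow_lt_rpow hb0 hb (by linarith : 0 < α / 2)
    calc ((D / (10 * Δ)) : ℝ) ^ (α : ℝ)
        = ((D / (10 * Δ)) ^ 2 : ℝ) ^ (α / 2) := by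
          rw [← Real.rpow_natCast (D / (10 * Δ)) 2, ← Real.rpow_mul (by positivity)]
          congr 1
          push_cast
          ring
      _ < ((101 : ℝ) / 100) ^ (α / 2) := this
  -- put it together
  have hkey : P (pt i 0) * (10 * (Δ:ℝ)) ^ (-α) / (P (pt j 0) * D ^ (-α)) * P (pt j 0)
      < P (pt i 0) * ((101 : ℝ) / 100) ^ (α / 2) := by
    have hDα : (0:ℝ) < D ^ (-α) := Real.rpow_pos_of_pos hDpos _
    have h10α : (0:ℝ) < (10 * (Δ:ℝ)) ^ (-α) := Real.rpow_pos_of_pos hd0 _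
    have hratio : (10 * (Δ:ℝ)) ^ (-α) / D ^ (-α) = (D / (10 * Δ)) ^ (α : ℝ) := by
      rw [Real.div_rpow hDnn hd0.le, Real.rpow_neg hd0.le, Real.rpow_neg hDnn]
      field_simp
    have heq : P (pt i 0) * (10 * (Δ:ℝ)) ^ (-α) / (P (pt j 0) * D ^ (-α)) * P (pt j 0)
        = P (pt i 0) * ((10 * (Δ:ℝ)) ^ (-α) / D ^ (-α)) := by
      field_simp
    rw [heq, hratio]
    exact mul_lt_mul_of_pos_left hr hpi
  calc sinr α N St P (pt i (10 * Δ)) (pt i 0) * P (pt j 0)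
      ≤ P (pt i 0) * (10 * (Δ:ℝ)) ^ (-α) / (P (pt j 0) * D ^ (-α)) * P (pt j 0) :=
        mul_le_mul_of_nonneg_right hsinr_le hpj.le
    _ < P (pt i 0) * ((101 : ℝ) / 100) ^ (α / 2) := hkey

/-- In the two-parallel-lines construction with senders `vᵢ = (i, 0)` and receivers
`uᵢ = (i, 10Δ)` for `i ∈ {1, …, Δ}`, with `β ≥ (101/100)^(α/2)` and arbitrary positive
powers, any transmission schedule of `T < Δ` slots leaves some receiver `uᵢ` that never
successfully receives from its unique neighbor `vᵢ`: so `f_prog ≥ Δ` even for a centrally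
computed optimal schedule with arbitrary powers. -/
theorem stmt_5 (Δ : ℕ) (hΔ : 1 ≤ Δ) (α β N : ℝ) (hα : 0 < α) (hN : 0 ≤ N)
    (hβ : ((101 : ℝ) / 100) ^ (α / 2) ≤ β)
    (P : EuclideanSpace ℝ (Fin 2) → ℝ)
    (hP : ∀ i ∈ Finset.Icc 1 Δ, 0 < P (pt i 0))
    (T : ℕ) (hT : T < Δ)
    (S : Fin T → Finset (EuclideanSpace ℝ (Fin 2)))
    (hS : ∀ t, S t ⊆ (Finset.Icc 1 Δ).image fun i : ℕ => pt i 0) :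
    ∃ i ∈ Finset.Icc 1 Δ, ∀ t : Fin T,
      ¬ (pt i 0 ∈ S t ∧ β ≤ sinr α N (S t) P (pt i (10 * Δ)) (pt i 0)) := by
  by_contra hcon
  push_neg at hcon
  have h1Δ : (1 : ℕ) ∈ Finset.Icc 1 Δ := Finset.mem_Icc.mpr ⟨le_refl 1, hΔ⟩
  rcases Nat.eq_zero_or_pos T with hT0 | hTpos
  · obtain ⟨t, _⟩ := hcon 1 h1Δ
    exact absurd t.2 (by omega)
  have : Inhabited (Fin T) := ⟨⟨0, hTpos⟩⟩
  choose g hg using hcon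
  set f : ℕ → Fin T := fun i => if hi : i ∈ Finset.Icc 1 Δ then g i hi else default with hf
  have hmap : ∀ i ∈ Finset.Icc 1 Δ, f i ∈ (Finset.univ : Finset (Fin T)) := fun _ _ =>
    Finset.mem_univ _
  have hcard : (Finset.univ : Finset (Fin T)).card < (Finset.Icc 1 Δ).card := by
    simp [Nat.card_Icc]
    omega
  obtain ⟨i, hi, j, hj, hij, hfij⟩ :=
    Finset.exists_ne_map_eq_of_card_lt_of_maps_to hcard hmap
  have hgi := hg i hi
  have hgj := hg j hj
  rw [hf] at hfij
  simp only [dif_pos hi, dif_pos hj] at hfij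
  set t := g i hi with ht
  have hgj' : pt j 0 ∈ S t ∧ β ≤ sinr α N (S t) P (pt j (10 * Δ)) (pt j 0) := by
    rw [ht.trans hfij]; exact hgj
  have hpi := hP i hi
  have hpj := hP j hj
  have hr : (0:ℝ) < ((101 : ℝ) / 100) ^ (α / 2) := Real.rpow_pos_of_pos (by norm_num) _
  have hβ0 : 0 < β := lt_of_lt_of_le hr hβ
  have hb1 : sinr α N (S t) P (pt i (10 * Δ)) (pt i 0) * P (pt j 0)
      < P (pt i 0) * ((101 : ℝ) / 100) ^ (α / 2) :=
    sinr_bound Δ hΔ α N hα hN P hP (S t) (hS t) i j hi hj hij hgj'.1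
  have hb2 : sinr α N (S t) P (pt j (10 * Δ)) (pt j 0) * P (pt i 0)
      < P (pt j 0) * ((101 : ℝ) / 100) ^ (α / 2) :=
    sinr_bound Δ hΔ α N hα hN P hP (S t) (hS t) j i hj hi (Ne.symm hij) hgi.1
  have hc1 : β * P (pt j 0) < P (pt i 0) * ((101 : ℝ) / 100) ^ (α / 2) :=
    lt_of_le_of_lt (mul_le_mul_of_nonneg_right hgi.2 hpj.le) hb1
  have hc2 : β * P (pt i 0) < P (pt j 0) * ((101 : ℝ) / 100) ^ (α / 2) :=
    lt_of_le_of_lt (mul_le_mul_of_nonneg_right hgj'.2 hpi.le) hb2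
  nlinarith [mul_pos hpi hpj, mul_lt_mul'' hc1 hc2 (by positivity) (by positivity),
    mul_le_mul hβ hβ hr.le hβ0.le]
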